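/- Vorticity formulation: if (u₁^ε, u₂^ε) is a C³ solution of the viscous plane-parallel system on Ω with f₁, f₂ differentiable, then the vorticity components ω₁^ε = −∂_z u₂^ε, ω₂^ε = d_z u₁^ε, ω₃^ε = ∂_x u₂^ε satisfy on Ω: (i) ω₁^ε − ε Δ ω₁^ε − ω₂^ε ω₃^ε + u₁^ε ∂_x ω₁^ε = −∂_z f₂; (ii) ω₂^ε − ε d²_z ω₂^ε = d_z f₁; (iii) ω₃^ε − ε Δ ω₃^ε + u₁^ε ∂_x ω₃^ε = ∂_x f₂. -/

import Mathlib

/-- Partial derivative in `x` of a function of two variables. -/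
noncomputable def pdx (g : ℝ → ℝ → ℝ) (x z : ℝ) : ℝ := deriv (fun x' => g x' z) x

/-- Partial derivative in `z` of a function of two variables. -/
noncomputable def pdz (g : ℝ → ℝ → ℝ) (x z : ℝ) : ℝ := deriv (fun z' => g x z') z

/-- Laplacian `∂²_x + ∂²_z` of a function of two variables. -/
noncomputable def lap (g : ℝ → ℝ → ℝ) (x z : ℝ) : ℝ :=
  pdx (pdx g) x z + pdz (pdz g) x z

/-- Uncurried version. -/
noncomputable def unc (g : ℝ → ℝ → ℝ) : ℝ × ℝ → ℝ := fun p => g p.1 p.2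

lemma hasDerivAt_pdx_aux (g : ℝ → ℝ → ℝ) {x z : ℝ}
    (h : DifferentiableAt ℝ (unc g) (x, z)) :
    HasDerivAt (fun x' => g x' z) (fderiv ℝ (unc g) (x, z) (1, 0)) x := by
  have hl : HasDerivAt (fun x' : ℝ => (x', z)) ((1:ℝ), (0:ℝ)) x :=
    (hasDerivAt_id x).prodMk (hasDerivAt_const x z)
  simpa [unc, Function.comp_def] using h.hasFDerivAt.comp_hasDerivAt x hl

lemma hasDerivAt_pdz_aux (g : ℝ → ℝ → ℝ) {x z : ℝ}
    (h : DifferentiableAt ℝ (unc g) (x, z)) :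
    HasDerivAt (fun z' => g x z') (fderiv ℝ (unc g) (x, z) (0, 1)) z := by
  have hl : HasDerivAt (fun z' : ℝ => (x, z')) ((0:ℝ), (1:ℝ)) z :=
    (hasDerivAt_const z x).prodMk (hasDerivAt_id z)
  simpa [unc, Function.comp_def] using h.hasFDerivAt.comp_hasDerivAt z hl

lemma pdx_eq (g : ℝ → ℝ → ℝ) {x z : ℝ} (h : DifferentiableAt ℝ (unc g) (x, z)) :
    pdx g x z = fderiv ℝ (unc g) (x, z) (1, 0) := (hasDerivAt_pdx_aux g h).deriv

lemma pdz_eq (g : ℝ → ℝ → ℝ) {x z : ℝ} (h : DifferentiableAt ℝ (unc g) (x, z)) :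
    pdz g x z = fderiv ℝ (unc g) (x, z) (0, 1) := (hasDerivAt_pdz_aux g h).deriv

lemma hasDerivAt_pdx (g : ℝ → ℝ → ℝ) {x z : ℝ}
    (h : DifferentiableAt ℝ (unc g) (x, z)) :
    HasDerivAt (fun x' => g x' z) (pdx g x z) x := by
  rw [pdx_eq g h]; exact hasDerivAt_pdx_aux g h

lemma hasDerivAt_pdz (g : ℝ → ℝ → ℝ) {x z : ℝ}
    (h : DifferentiableAt ℝ (unc g) (x, z)) :
    HasDerivAt (fun z' => g x z') (pdz g x z) z := by
  rw [pdz_eq g h]; exact hasDerivAt_pdz_aux g h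

lemma unc_pdx_eq (g : ℝ → ℝ → ℝ) (h : Differentiable ℝ (unc g)) :
    unc (pdx g) = fun p : ℝ × ℝ => fderiv ℝ (unc g) p (1, 0) := by
  funext p
  exact pdx_eq g (h (p.1, p.2))

lemma unc_pdz_eq (g : ℝ → ℝ → ℝ) (h : Differentiable ℝ (unc g)) :
    unc (pdz g) = fun p : ℝ × ℝ => fderiv ℝ (unc g) p (0, 1) := by
  funext p
  exact pdz_eq g (h (p.1, p.2))

lemma contDiff_unc_pdx {n : ℕ∞} (g : ℝ → ℝ → ℝ) (h : ContDiff ℝ (n + 1) (unc g)) :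
    ContDiff ℝ n (unc (pdx g)) := by
  rw [unc_pdx_eq g (h.differentiable (by simp))]
  exact (h.fderiv_right le_rfl).clm_apply contDiff_const

lemma contDiff_unc_pdz {n : ℕ∞} (g : ℝ → ℝ → ℝ) (h : ContDiff ℝ (n + 1) (unc g)) :
    ContDiff ℝ n (unc (pdz g)) := by
  rw [unc_pdz_eq g (h.differentiable (by simp))]
  exact (h.fderiv_right le_rfl).clm_apply contDiff_const

lemma schwarz (g : ℝ → ℝ → ℝ) (h : ContDiff ℝ 2 (unc g)) (x z : ℝ) :
    pdx (pdz g) x z = pdz (pdx g) x z := by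
  have hd : Differentiable ℝ (unc g) := h.differentiable two_ne_zero
  have h1 : ContDiff ℝ 1 (fderiv ℝ (unc g)) := h.fderiv_right (by norm_num)
  have hd1 : Differentiable ℝ (fderiv ℝ (unc g)) := h1.differentiable one_ne_zero
  have hsym := second_derivative_symmetric (f := unc g)
    (fun y => (hd y).hasFDerivAt) ((hd1 (x, z)).hasFDerivAt)
  have h2 : ContDiff ℝ 1 (unc (pdz g)) := by
    have : ContDiff ℝ (1 + 1) (unc g) := by norm_num; exact h
    exact contDiff_unc_pdz g this
  have h3 : ContDiff ℝ 1 (unc (pdx g)) := by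
    have : ContDiff ℝ (1 + 1) (unc g) := by norm_num; exact h
    exact contDiff_unc_pdx g this
  have e1 : pdx (pdz g) x z = fderiv ℝ (unc (pdz g)) (x, z) (1, 0) :=
    pdx_eq _ ((h2.differentiable one_ne_zero) (x, z))
  have e2 : pdz (pdx g) x z = fderiv ℝ (unc (pdx g)) (x, z) (0, 1) :=
    pdz_eq _ ((h3.differentiable one_ne_zero) (x, z))
  rw [e1, e2, unc_pdz_eq g hd, unc_pdx_eq g hd]
  rw [fderiv_clm_apply (hd1 (x, z)) (differentiableAt_const _),
      fderiv_clm_apply (hd1 (x, z)) (differentiableAt_const _)]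
  simp [hsym (1, 0) (0, 1)]

lemma pdx_neg (g : ℝ → ℝ → ℝ) (x z : ℝ) :
    pdx (fun x' z' => -(g x' z')) x z = -(pdx g x z) := by
  simp only [pdx]
  exact deriv.neg

lemma pdz_neg (g : ℝ → ℝ → ℝ) (x z : ℝ) :
    pdz (fun x' z' => -(g x' z')) x z = -(pdz g x z) := by
  simp only [pdz]
  exact deriv.neg

theorem test : True := trivial

theorem statement7 (L ε : ℝ) (hL : 0 < L) (hε : 0 < ε)
    (f₁ : ℝ → ℝ) (f₂ : ℝ → ℝ → ℝ)
    (hf₁ : ContDiff ℝ 1 f₁)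
    (hf₂ : ContDiff ℝ 1 (fun p : ℝ × ℝ => f₂ p.1 p.2))
    (hf₂per : ∀ x z : ℝ, f₂ (x + L) z = f₂ x z)
    (u₁ : ℝ → ℝ) (u₂ : ℝ → ℝ → ℝ)
    (hu₁ : ContDiff ℝ 3 u₁)
    (hu₂ : ContDiff ℝ 3 (fun p : ℝ × ℝ => u₂ p.1 p.2))
    (heq₁ : ∀ z ∈ Set.Ioo (0:ℝ) 1, u₁ z - ε * deriv (deriv u₁) z = f₁ z)
    (heq₂ : ∀ x ∈ Set.Ioo (0:ℝ) L, ∀ z ∈ Set.Ioo (0:ℝ) 1,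
      u₂ x z - ε * lap u₂ x z + u₁ z * pdx u₂ x z = f₂ x z)
    (hper : ∀ x z : ℝ, u₂ (x + L) z = u₂ x z) :
    -- (i)
    (∀ x ∈ Set.Ioo (0:ℝ) L, ∀ z ∈ Set.Ioo (0:ℝ) 1,
      -(pdz u₂ x z) - ε * lap (fun x' z' => -(pdz u₂ x' z')) x z
        - deriv u₁ z * pdx u₂ x z
        + u₁ z * pdx (fun x' z' => -(pdz u₂ x' z')) x z
        = -(pdz f₂ x z))
    -- (ii)
    ∧ (∀ z ∈ Set.Ioo (0:ℝ) 1,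
      deriv u₁ z - ε * deriv (deriv (deriv u₁)) z = deriv f₁ z)
    -- (iii)
    ∧ (∀ x ∈ Set.Ioo (0:ℝ) L, ∀ z ∈ Set.Ioo (0:ℝ) 1,
      pdx u₂ x z - ε * lap (pdx u₂) x z + u₁ z * pdx (pdx u₂) x z
        = pdx f₂ x z) := by
  have hu₂' : ContDiff ℝ 3 (unc u₂) := hu₂
  have hu₂2 : ContDiff ℝ 2 (unc u₂) := hu₂'.of_le (by norm_num)
  have h21 : ContDiff ℝ (2 + 1) (unc u₂) := by norm_num; exact hu₂'
  have A1 : ContDiff ℝ 2 (unc (pdx u₂)) := contDiff_unc_pdx u₂ h21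
  have A2 : ContDiff ℝ 2 (unc (pdz u₂)) := contDiff_unc_pdz u₂ h21
  have A1' : ContDiff ℝ (1 + 1) (unc (pdx u₂)) := by norm_num; exact A1
  have A2' : ContDiff ℝ (1 + 1) (unc (pdz u₂)) := by norm_num; exact A2
  have A11 : ContDiff ℝ 1 (unc (pdx (pdx u₂))) := contDiff_unc_pdx _ A1'
  have A22 : ContDiff ℝ 1 (unc (pdz (pdz u₂))) := contDiff_unc_pdz _ A2'
  have E1 : pdx (pdz u₂) = pdz (pdx u₂) :=
    funext fun a => funext fun b => schwarz u₂ hu₂2 a b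
  have hlapC : ContDiff ℝ 1 (unc (lap u₂)) := by
    have : unc (lap u₂) = fun p => unc (pdx (pdx u₂)) p + unc (pdz (pdz u₂)) p := rfl
    rw [this]; exact A11.add A22
  refine ⟨?_, ?_, ?_⟩
  · -- (i)
    intro x hx z hz
    have hev : (fun z' => u₂ x z' - ε * lap u₂ x z' + u₁ z' * pdx u₂ x z')
        =ᶠ[nhds z] (fun z' => f₂ x z') := by
      filter_upwards [isOpen_Ioo.mem_nhds hz] with y hy
      exact heq₂ x hx y hy
    have H1 : HasDerivAt (fun z' => u₂ x z') (pdz u₂ x z) z :=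
      hasDerivAt_pdz u₂ ((hu₂'.differentiable (by norm_num)) (x, z))
    have H2 : HasDerivAt (fun z' => lap u₂ x z') (pdz (lap u₂) x z) z :=
      hasDerivAt_pdz _ ((hlapC.differentiable one_ne_zero) (x, z))
    have H3 : HasDerivAt ((fun z' => pdx u₂ x z')) (pdz (pdx u₂) x z) z :=
      hasDerivAt_pdz _ ((A1.differentiable two_ne_zero) (x, z))
    have Hu1 : HasDerivAt u₁ (deriv u₁ z) z :=
      ((hu₁.differentiable (by norm_num)) z).hasDerivAt
    have Htot := (H1.sub (H2.const_mul ε)).add (Hu1.mul H3)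
    have key : pdz u₂ x z - ε * pdz (lap u₂) x z +
        (deriv u₁ z * pdx u₂ x z + u₁ z * pdz (pdx u₂) x z) = pdz f₂ x z := by
      have h := hev.deriv_eq; exact Htot.deriv.symm.trans h
    have hlapneg : lap (fun x' z' => -(pdz u₂ x' z')) x z = -(pdz (lap u₂) x z) := by
      have e1 : pdx (fun x' z' => -(pdz u₂ x' z'))
          = fun x' z' => -(pdx (pdz u₂) x' z') :=
        funext fun a => funext fun b => pdx_neg _ a b
      have e2 : pdz (fun x' z' => -(pdz u₂ x' z'))
          = fun x' z' => -(pdz (pdz u₂) x' z') :=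
        funext fun a => funext fun b => pdz_neg _ a b
      have hval : lap (fun x' z' => -(pdz u₂ x' z')) x z
          = -(pdx (pdx (pdz u₂)) x z) - (pdz (pdz (pdz u₂)) x z) := by
        show pdx (pdx fun x' z' => -(pdz u₂ x' z')) x z
          + pdz (pdz fun x' z' => -(pdz u₂ x' z')) x z = _
        rw [e1, e2, pdx_neg, pdz_neg]; ring
      have Ha : HasDerivAt (fun z' => pdx (pdx u₂) x z') (pdz (pdx (pdx u₂)) x z) z :=
        hasDerivAt_pdz _ ((A11.differentiable one_ne_zero) (x, z))
      have Hb : HasDerivAt (fun z' => pdz (pdz u₂) x z') (pdz (pdz (pdz u₂)) x z) z :=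
        hasDerivAt_pdz _ ((A22.differentiable one_ne_zero) (x, z))
      have h4 : pdz (lap u₂) x z = pdz (pdx (pdx u₂)) x z + pdz (pdz (pdz u₂)) x z :=
        (Ha.add Hb).deriv
      have h5 : pdx (pdx (pdz u₂)) x z = pdz (pdx (pdx u₂)) x z := by
        rw [E1]; exact schwarz (pdx u₂) A1 x z
      rw [hval, h4, h5]; ring
    have hpdxneg : pdx (fun x' z' => -(pdz u₂ x' z')) x z = -(pdz (pdx u₂) x z) := by
      rw [pdx_neg, schwarz u₂ hu₂2 x z]
    rw [hlapneg, hpdxneg]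
    linarith [key]
  · -- (ii)
    intro z hz
    have h3 : ContDiff ℝ (2 + 1) u₁ := by norm_num; exact hu₁
    have hd1 : ContDiff ℝ 2 (deriv u₁) := (contDiff_succ_iff_deriv.mp h3).2.2
    have hd1' : ContDiff ℝ (1 + 1) (deriv u₁) := by norm_num; exact hd1
    have hd2 : ContDiff ℝ 1 (deriv (deriv u₁)) := (contDiff_succ_iff_deriv.mp hd1').2.2
    have Ha : HasDerivAt u₁ (deriv u₁ z) z :=
      ((hu₁.differentiable (by norm_num)) z).hasDerivAt
    have Hb : HasDerivAt (deriv (deriv u₁)) (deriv (deriv (deriv u₁)) z) z :=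
      ((hd2.differentiable one_ne_zero) z).hasDerivAt
    have Htot := Ha.sub (Hb.const_mul ε)
    have hev : (fun z' => u₁ z' - ε * deriv (deriv u₁) z') =ᶠ[nhds z] f₁ := by
      filter_upwards [isOpen_Ioo.mem_nhds hz] with y hy
      exact heq₁ y hy
    have h := hev.deriv_eq; exact Htot.deriv.symm.trans h
  · -- (iii)
    intro x hx z hz
    have hev : (fun x' => u₂ x' z - ε * lap u₂ x' z + u₁ z * pdx u₂ x' z)
        =ᶠ[nhds x] (fun x' => f₂ x' z) := by
      filter_upwards [isOpen_Ioo.mem_nhds hx] with y hy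
      exact heq₂ y hy z hz
    have H1 : HasDerivAt (fun x' => u₂ x' z) (pdx u₂ x z) x :=
      hasDerivAt_pdx u₂ ((hu₂'.differentiable (by norm_num)) (x, z))
    have H2 : HasDerivAt (fun x' => lap u₂ x' z) (pdx (lap u₂) x z) x :=
      hasDerivAt_pdx _ ((hlapC.differentiable one_ne_zero) (x, z))
    have H3 : HasDerivAt (fun x' => pdx u₂ x' z) (pdx (pdx u₂) x z) x :=
      hasDerivAt_pdx _ ((A1.differentiable two_ne_zero) (x, z))
    have Htot := (H1.sub (H2.const_mul ε)).add (H3.const_mul (u₁ z))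
    have key : pdx u₂ x z - ε * pdx (lap u₂) x z + u₁ z * pdx (pdx u₂) x z
        = pdx f₂ x z := by
      have h := hev.deriv_eq; exact Htot.deriv.symm.trans h
    have hcomm : pdx (lap u₂) x z = lap (pdx u₂) x z := by
      have Ha : HasDerivAt (fun x' => pdx (pdx u₂) x' z) (pdx (pdx (pdx u₂)) x z) x :=
        hasDerivAt_pdx _ ((A11.differentiable one_ne_zero) (x, z))
      have Hb : HasDerivAt (fun x' => pdz (pdz u₂) x' z) (pdx (pdz (pdz u₂)) x z) x :=
        hasDerivAt_pdx _ ((A22.differentiable one_ne_zero) (x, z))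
      have h4 : pdx (lap u₂) x z = pdx (pdx (pdx u₂)) x z + pdx (pdz (pdz u₂)) x z :=
        (Ha.add Hb).deriv
      have h5 : pdx (pdz (pdz u₂)) x z = pdz (pdz (pdx u₂)) x z := by
        rw [schwarz (pdz u₂) A2 x z, E1]
      rw [h4, h5]; rfl
    rw [← hcomm]; exact key
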